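/- If for all (s,a) the total variation distance between two Markov transition kernels P̂ and P is at most a uniform bound u(s,a), rewards are bounded by r_max, and the policy, starting distribution are shared, then the difference in expected discounted returns of any policy π under P̂ versus P is at most (2γ r_max / (1-γ)²) · sup_{s,a} u(s,a). -/

import Mathlib

open Finset

/-- State distribution after `t` steps, following policy `pol` under
transition kernel `P`, starting from initial distribution `ρ`. -/
noncomputable def distAt {S A : Type*} [Fintype S] [Fintype A]
    (P : S → A → S → ℝ) (pol : S → A → ℝ) (ρ : S → ℝ) : ℕ → S → ℝ
  | 0 => ρ
  | t + 1 => fun s' => ∑ s, ∑ a, distAt P pol ρ t s * pol s a * P s a s'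

/-- Expected discounted return `J_ρ(π) = E[∑_t γ^t r(s_t,a_t)]` of policy
`pol` under kernel `P`, reward `r`, discount `γ`, initial distribution `ρ`. -/
noncomputable def ret {S A : Type*} [Fintype S] [Fintype A]
    (P : S → A → S → ℝ) (pol : S → A → ℝ) (r : S → A → ℝ) (γ : ℝ) (ρ : S → ℝ) : ℝ :=
  ∑' t : ℕ, γ ^ t * ∑ s, ∑ a, distAt P pol ρ t s * pol s a * r s a

/-- Total variation distance between two (sub)distributions on a finite set:
half the `ℓ¹` distance. -/
noncomputable def tvDist {S : Type*} [Fintype S] (ρ₁ ρ₂ : S → ℝ) : ℝ :=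
  (1 / 2) * ∑ s, |ρ₁ s - ρ₂ s|


lemma distAt_prob {S A : Type*} [Fintype S] [Fintype A]
    (P : S → A → S → ℝ) (pol : S → A → ℝ) (ρ : S → ℝ)
    (hP0 : ∀ s a s', 0 ≤ P s a s') (hP1 : ∀ s a, ∑ s', P s a s' = 1)
    (hpol0 : ∀ s a, 0 ≤ pol s a) (hpol1 : ∀ s, ∑ a, pol s a = 1)
    (hρ0 : ∀ s, 0 ≤ ρ s) (hρ1 : ∑ s, ρ s = 1) :
    ∀ t, (∀ s, 0 ≤ distAt P pol ρ t s) ∧ ∑ s, distAt P pol ρ t s = 1 := by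
  intro t
  induction t with
  | zero => exact ⟨hρ0, hρ1⟩
  | succ t ih =>
    constructor
    · intro s'
      simp only [distAt]
      exact Finset.sum_nonneg fun s _ => Finset.sum_nonneg fun a _ =>
        mul_nonneg (mul_nonneg (ih.1 s) (hpol0 s a)) (hP0 s a s')
    · simp only [distAt]
      rw [Finset.sum_comm]
      have h : ∀ s ∈ Finset.univ (α := S),
          ∑ s' : S, ∑ a : A, distAt P pol ρ t s * pol s a * P s a s'
            = distAt P pol ρ t s := by
        intro s _
        rw [Finset.sum_comm]
        calc ∑ a, ∑ s', distAt P pol ρ t s * pol s a * P s a s'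
            = ∑ a, distAt P pol ρ t s * pol s a * ∑ s', P s a s' := by
              refine Finset.sum_congr rfl fun a _ => ?_
              rw [Finset.mul_sum]
          _ = ∑ a, distAt P pol ρ t s * pol s a := by simp [hP1]
          _ = distAt P pol ρ t s * ∑ a, pol s a := by rw [Finset.mul_sum]
          _ = distAt P pol ρ t s := by rw [hpol1 s, mul_one]
      rw [Finset.sum_congr rfl h, ih.2]
lemma eps_bound {S A : Type*} [Fintype S] [Fintype A]
    (P Phat : S → A → S → ℝ) (pol : S → A → ℝ) (ρ : S → ℝ) (ustar : ℝ)
    (hP0 : ∀ s a s', 0 ≤ P s a s') (hP1 : ∀ s a, ∑ s', P s a s' = 1)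
    (hPhat0 : ∀ s a s', 0 ≤ Phat s a s') (hPhat1 : ∀ s a, ∑ s', Phat s a s' = 1)
    (hpol0 : ∀ s a, 0 ≤ pol s a) (hpol1 : ∀ s, ∑ a, pol s a = 1)
    (hρ0 : ∀ s, 0 ≤ ρ s) (hρ1 : ∑ s, ρ s = 1)
    (htv : ∀ s a, ∑ s', |Phat s a s' - P s a s'| ≤ 2 * ustar) :
    ∀ t, ∑ s, |distAt Phat pol ρ t s - distAt P pol ρ t s| ≤ 2 * t * ustar := by
  intro t
  induction t with
  | zero => simp [distAt]
  | succ t ih =>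
    have hprob := distAt_prob P pol ρ hP0 hP1 hpol0 hpol1 hρ0 hρ1 t
    set f : S → ℝ := distAt Phat pol ρ t with hf
    set g : S → ℝ := distAt P pol ρ t with hg
    have hsplit : ∀ s' : S,
        (∑ s, ∑ a, f s * pol s a * Phat s a s') - (∑ s, ∑ a, g s * pol s a * P s a s')
          = (∑ s, ∑ a, (f s - g s) * pol s a * Phat s a s')
            + (∑ s, ∑ a, g s * pol s a * (Phat s a s' - P s a s')) := by
      intro s'
      rw [← Finset.sum_add_distrib, ← Finset.sum_sub_distrib]
      refine Finset.sum_congr rfl fun s _ => ?_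
      rw [← Finset.sum_add_distrib, ← Finset.sum_sub_distrib]
      exact Finset.sum_congr rfl fun a _ => by ring
    have hX : ∑ s' : S, |∑ s, ∑ a, (f s - g s) * pol s a * Phat s a s'|
        ≤ ∑ s, |f s - g s| := by
      calc ∑ s' : S, |∑ s, ∑ a, (f s - g s) * pol s a * Phat s a s'|
          ≤ ∑ s' : S, ∑ s, ∑ a, |f s - g s| * pol s a * Phat s a s' := by
            refine Finset.sum_le_sum fun s' _ => ?_
            refine (Finset.abs_sum_le_sum_abs _ _).trans (Finset.sum_le_sum fun s _ => ?_)
            refine (Finset.abs_sum_le_sum_abs _ _).trans (Finset.sum_le_sum fun a _ => ?_)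
            rw [abs_mul, abs_mul, abs_of_nonneg (hpol0 s a), abs_of_nonneg (hPhat0 s a s')]
        _ = ∑ s, ∑ a, ∑ s' : S, |f s - g s| * pol s a * Phat s a s' := by
            rw [Finset.sum_comm]
            exact Finset.sum_congr rfl fun s _ => Finset.sum_comm
        _ = ∑ s, |f s - g s| := by
            refine Finset.sum_congr rfl fun s _ => ?_
            calc ∑ a, ∑ s' : S, |f s - g s| * pol s a * Phat s a s'
                = ∑ a, |f s - g s| * pol s a := by
                  refine Finset.sum_congr rfl fun a _ => ?_
                  rw [← Finset.mul_sum, hPhat1 s a, mul_one]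
              _ = |f s - g s| := by rw [← Finset.mul_sum, hpol1 s, mul_one]
    have hY : ∑ s' : S, |∑ s, ∑ a, g s * pol s a * (Phat s a s' - P s a s')|
        ≤ 2 * ustar := by
      calc ∑ s' : S, |∑ s, ∑ a, g s * pol s a * (Phat s a s' - P s a s')|
          ≤ ∑ s' : S, ∑ s, ∑ a, g s * pol s a * |Phat s a s' - P s a s'| := by
            refine Finset.sum_le_sum fun s' _ => ?_
            refine (Finset.abs_sum_le_sum_abs _ _).trans (Finset.sum_le_sum fun s _ => ?_)
            refine (Finset.abs_sum_le_sum_abs _ _).trans (Finset.sum_le_sum fun a _ => ?_)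
            rw [abs_mul, abs_of_nonneg (mul_nonneg (hprob.1 s) (hpol0 s a))]
        _ = ∑ s, ∑ a, g s * pol s a * ∑ s' : S, |Phat s a s' - P s a s'| := by
            rw [Finset.sum_comm]
            refine Finset.sum_congr rfl fun s _ => ?_
            rw [Finset.sum_comm]
            exact Finset.sum_congr rfl fun a _ => (Finset.mul_sum _ _ _).symm
        _ ≤ ∑ s, ∑ a, g s * pol s a * (2 * ustar) := by
            refine Finset.sum_le_sum fun s _ => Finset.sum_le_sum fun a _ => ?_
            exact mul_le_mul_of_nonneg_left (htv s a) (mul_nonneg (hprob.1 s) (hpol0 s a))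
        _ = 2 * ustar := by
            have h1 : ∀ s ∈ Finset.univ (α := S),
                ∑ a, g s * pol s a * (2 * ustar) = g s * (2 * ustar) := by
              intro s _
              rw [← Finset.sum_mul, ← Finset.mul_sum, hpol1 s, mul_one]
            rw [Finset.sum_congr rfl h1, ← Finset.sum_mul, hprob.2, one_mul]
    have step : ∑ s, |distAt Phat pol ρ (t+1) s - distAt P pol ρ (t+1) s|
        ≤ (∑ s, |f s - g s|) + 2 * ustar := by
      simp only [distAt, ← hf, ← hg]
      calc ∑ s' : S, |(∑ s, ∑ a, f s * pol s a * Phat s a s')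
              - (∑ s, ∑ a, g s * pol s a * P s a s')|
          = ∑ s' : S, |(∑ s, ∑ a, (f s - g s) * pol s a * Phat s a s')
              + (∑ s, ∑ a, g s * pol s a * (Phat s a s' - P s a s'))| := by
            exact Finset.sum_congr rfl fun s' _ => by rw [hsplit s']
        _ ≤ ∑ s' : S, (|∑ s, ∑ a, (f s - g s) * pol s a * Phat s a s'|
              + |∑ s, ∑ a, g s * pol s a * (Phat s a s' - P s a s')|) :=
            Finset.sum_le_sum fun s' _ => abs_add_le _ _
        _ = (∑ s' : S, |∑ s, ∑ a, (f s - g s) * pol s a * Phat s a s'|)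
              + ∑ s' : S, |∑ s, ∑ a, g s * pol s a * (Phat s a s' - P s a s')| :=
            Finset.sum_add_distrib
        _ ≤ (∑ s, |f s - g s|) + 2 * ustar := add_le_add hX hY
    calc ∑ s, |distAt Phat pol ρ (t+1) s - distAt P pol ρ (t+1) s|
        ≤ (∑ s, |f s - g s|) + 2 * ustar := step
      _ ≤ 2 * t * ustar + 2 * ustar := add_le_add_left ih _
      _ = 2 * (t + 1 : ℕ) * ustar := by push_cast; ring
/-- Simulation lemma: if for all `(s,a)` the total variation distance between
two Markov transition kernels `P̂` and `P` is at most `u(s,a)`, rewards are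
in `[0, r_max]`, and the policy and starting distribution are shared, then
the difference in expected discounted returns of any policy `π` under `P̂`
versus `P` is at most `(2 γ r_max / (1-γ)²) · sup_{s,a} u(s,a)`. -/
theorem simulation_lemma {S A : Type*} [Fintype S] [Fintype A]
    [Nonempty S] [Nonempty A]
    (P Phat : S → A → S → ℝ) (pol : S → A → ℝ) (r : S → A → ℝ) (γ : ℝ)
    (ρ : S → ℝ) (rmax : ℝ) (u : S → A → ℝ)
    (hγ0 : 0 ≤ γ) (hγ1 : γ < 1)
    (hr : ∀ s a, 0 ≤ r s a ∧ r s a ≤ rmax)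
    (hP0 : ∀ s a s', 0 ≤ P s a s') (hP1 : ∀ s a, ∑ s', P s a s' = 1)
    (hPhat0 : ∀ s a s', 0 ≤ Phat s a s') (hPhat1 : ∀ s a, ∑ s', Phat s a s' = 1)
    (hpol0 : ∀ s a, 0 ≤ pol s a) (hpol1 : ∀ s, ∑ a, pol s a = 1)
    (hρ0 : ∀ s, 0 ≤ ρ s) (hρ1 : ∑ s, ρ s = 1)
    (hu : ∀ s a, tvDist (Phat s a) (P s a) ≤ u s a) :
    |ret Phat pol r γ ρ - ret P pol r γ ρ| ≤
      (2 * γ * rmax / (1 - γ) ^ 2) * ⨆ sa : S × A, u sa.1 sa.2 := by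
  obtain ⟨s0⟩ := ‹Nonempty S›
  obtain ⟨a0⟩ := ‹Nonempty A›
  have hrmax : 0 ≤ rmax := le_trans (hr s0 a0).1 (hr s0 a0).2
  set ustar := ⨆ sa : S × A, u sa.1 sa.2 with hustar
  have hbdd : BddAbove (Set.range fun sa : S × A => u sa.1 sa.2) :=
    Set.Finite.bddAbove (Set.finite_range _)
  have hust : ∀ s a, u s a ≤ ustar := fun s a => le_ciSup hbdd (s, a)
  have htv0 : ∀ s a, 0 ≤ tvDist (Phat s a) (P s a) := by
    intro s a
    unfold tvDist
    positivity
  have hust0 : 0 ≤ ustar := le_trans (htv0 s0 a0) (le_trans (hu s0 a0) (hust s0 a0))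
  have h2tv : ∀ s a, ∑ s', |Phat s a s' - P s a s'| ≤ 2 * ustar := by
    intro s a
    have h1 := le_trans (hu s a) (hust s a)
    unfold tvDist at h1
    linarith
  have heps := eps_bound P Phat pol ρ ustar hP0 hP1 hPhat0 hPhat1 hpol0 hpol1 hρ0 hρ1 h2tv
  set R : ℕ → ℝ := fun t => ∑ s, ∑ a, distAt P pol ρ t s * pol s a * r s a with hR
  set Rh : ℕ → ℝ := fun t => ∑ s, ∑ a, distAt Phat pol ρ t s * pol s a * r s a with hRh
  -- bound on each return term
  have hRbnd : ∀ (Q : S → A → S → ℝ), (∀ s a s', 0 ≤ Q s a s') → (∀ s a, ∑ s', Q s a s' = 1) →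
      ∀ t, |∑ s, ∑ a, distAt Q pol ρ t s * pol s a * r s a| ≤ rmax := by
    intro Q hQ0 hQ1 t
    have hprob := distAt_prob Q pol ρ hQ0 hQ1 hpol0 hpol1 hρ0 hρ1 t
    have h0 : 0 ≤ ∑ s, ∑ a, distAt Q pol ρ t s * pol s a * r s a :=
      Finset.sum_nonneg fun s _ => Finset.sum_nonneg fun a _ =>
        mul_nonneg (mul_nonneg (hprob.1 s) (hpol0 s a)) (hr s a).1
    rw [abs_of_nonneg h0]
    calc ∑ s, ∑ a, distAt Q pol ρ t s * pol s a * r s a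
        ≤ ∑ s, ∑ a, distAt Q pol ρ t s * pol s a * rmax := by
          refine Finset.sum_le_sum fun s _ => Finset.sum_le_sum fun a _ => ?_
          exact mul_le_mul_of_nonneg_left (hr s a).2 (mul_nonneg (hprob.1 s) (hpol0 s a))
      _ = rmax := by
          have h1 : ∀ s ∈ Finset.univ (α := S),
              ∑ a, distAt Q pol ρ t s * pol s a * rmax = distAt Q pol ρ t s * rmax := by
            intro s _
            rw [← Finset.sum_mul, ← Finset.mul_sum, hpol1 s, mul_one]
          rw [Finset.sum_congr rfl h1, ← Finset.sum_mul, hprob.2, one_mul]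
  -- per-term reward difference bound
  have hRdiff : ∀ t : ℕ, |Rh t - R t| ≤ rmax * (2 * t * ustar) := by
    intro t
    have hprob := distAt_prob P pol ρ hP0 hP1 hpol0 hpol1 hρ0 hρ1 t
    set f : S → ℝ := distAt Phat pol ρ t
    set g : S → ℝ := distAt P pol ρ t
    have h1 : Rh t - R t = ∑ s, ∑ a, (f s - g s) * pol s a * r s a := by
      simp only [hR, hRh]
      rw [← Finset.sum_sub_distrib]
      refine Finset.sum_congr rfl fun s _ => ?_
      rw [← Finset.sum_sub_distrib]
      exact Finset.sum_congr rfl fun a _ => by ring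
    rw [h1]
    calc |∑ s, ∑ a, (f s - g s) * pol s a * r s a|
        ≤ ∑ s, ∑ a, |f s - g s| * pol s a * r s a := by
          refine (Finset.abs_sum_le_sum_abs _ _).trans (Finset.sum_le_sum fun s _ => ?_)
          refine (Finset.abs_sum_le_sum_abs _ _).trans (Finset.sum_le_sum fun a _ => ?_)
          rw [abs_mul, abs_mul, abs_of_nonneg (hpol0 s a), abs_of_nonneg (hr s a).1]
      _ ≤ ∑ s, ∑ a, |f s - g s| * pol s a * rmax := by
          refine Finset.sum_le_sum fun s _ => Finset.sum_le_sum fun a _ => ?_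
          exact mul_le_mul_of_nonneg_left (hr s a).2 (mul_nonneg (abs_nonneg _) (hpol0 s a))
      _ = (∑ s, |f s - g s|) * rmax := by
          have h2 : ∀ s ∈ Finset.univ (α := S),
              ∑ a, |f s - g s| * pol s a * rmax = |f s - g s| * rmax := by
            intro s _
            rw [← Finset.sum_mul, ← Finset.mul_sum, hpol1 s, mul_one]
          rw [Finset.sum_congr rfl h2, ← Finset.sum_mul]
      _ ≤ (2 * t * ustar) * rmax :=
          mul_le_mul_of_nonneg_right (heps t) hrmax
      _ = rmax * (2 * t * ustar) := by ring
  -- summability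
  have hγn : ‖γ‖ < 1 := by rw [Real.norm_eq_abs, abs_of_nonneg hγ0]; exact hγ1
  have hgeo : Summable (fun t : ℕ => γ ^ t * rmax) :=
    (summable_geometric_of_lt_one hγ0 hγ1).mul_right rmax
  have hsumm : ∀ (Q : S → A → S → ℝ), (∀ s a s', 0 ≤ Q s a s') → (∀ s a, ∑ s', Q s a s' = 1) →
      Summable (fun t : ℕ => γ ^ t * ∑ s, ∑ a, distAt Q pol ρ t s * pol s a * r s a) := by
    intro Q hQ0 hQ1
    refine Summable.of_norm_bounded hgeo fun t => ?_
    rw [Real.norm_eq_abs, abs_mul, abs_pow, abs_of_nonneg hγ0]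
    exact mul_le_mul_of_nonneg_left (hRbnd Q hQ0 hQ1 t) (pow_nonneg hγ0 t)
  have hsumP : Summable (fun t : ℕ => γ ^ t * R t) := hsumm P hP0 hP1
  have hsumPh : Summable (fun t : ℕ => γ ^ t * Rh t) := hsumm Phat hPhat0 hPhat1
  have hsumT : Summable (fun t : ℕ => (t : ℝ) * γ ^ t) := by
    have := summable_pow_mul_geometric_of_norm_lt_one (R := ℝ) 1 hγn
    simpa using this
  have hsumRHS : Summable (fun t : ℕ => (2 * rmax * ustar) * ((t : ℝ) * γ ^ t)) :=
    hsumT.mul_left _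
  have hb : ∀ t : ℕ, |γ ^ t * (Rh t - R t)| ≤ (2 * rmax * ustar) * ((t : ℝ) * γ ^ t) := by
    intro t
    rw [abs_mul, abs_pow, abs_of_nonneg hγ0]
    calc γ ^ t * |Rh t - R t| ≤ γ ^ t * (rmax * (2 * t * ustar)) :=
          mul_le_mul_of_nonneg_left (hRdiff t) (pow_nonneg hγ0 t)
      _ = (2 * rmax * ustar) * ((t : ℝ) * γ ^ t) := by ring
  have hsumAbs : Summable (fun t : ℕ => |γ ^ t * (Rh t - R t)|) :=
    Summable.of_nonneg_of_le (fun t => abs_nonneg _) hb hsumRHS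
  have key : ret Phat pol r γ ρ - ret P pol r γ ρ = ∑' t : ℕ, γ ^ t * (Rh t - R t) := by
    unfold ret
    rw [← Summable.tsum_sub hsumPh hsumP]
    exact tsum_congr fun t => by simp only [hR, hRh]; ring
  calc |ret Phat pol r γ ρ - ret P pol r γ ρ|
      = |∑' t : ℕ, γ ^ t * (Rh t - R t)| := by rw [key]
    _ ≤ ∑' t : ℕ, |γ ^ t * (Rh t - R t)| := by
        have h := norm_tsum_le_tsum_norm (f := fun t : ℕ => γ ^ t * (Rh t - R t))
          (by simpa only [Real.norm_eq_abs] using hsumAbs)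
        simpa only [Real.norm_eq_abs] using h
    _ ≤ ∑' t : ℕ, (2 * rmax * ustar) * ((t : ℝ) * γ ^ t) :=
        Summable.tsum_le_tsum hb hsumAbs hsumRHS
    _ = (2 * rmax * ustar) * ∑' t : ℕ, (t : ℝ) * γ ^ t := tsum_mul_left
    _ = (2 * rmax * ustar) * (γ / (1 - γ) ^ 2) := by
        rw [tsum_coe_mul_geometric_of_norm_lt_one hγn]
    _ = (2 * γ * rmax / (1 - γ) ^ 2) * ustar := by ring
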